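/- arXiv:math/0610673 — 11 statements merged into one kernel-verified Lean document; each statement's English description precedes it below -/
import Mathlib

section
/- Let (y,z) be a solution of the Hamiltonian system (9) with parameters (α₀,α₁,α₂,α₃,α₄) on an open set U ⊆ ℂ∖{0,1}. Then the pair ỹ(t) := 1 − y(1−t), z̃(t) := −z(1−t), defined on 1−U := {1−t : t ∈ U}, is a solution of the Hamiltonian system (9) with parameters (α₀,α₁,α₂,α₄,α₃) (i.e., with α₃ and α₄ interchanged). In particular, if α₃ = α₄ the system is invariant under this transformation σ₁. -/
/-- `(y, z)` is a (differentiable) solution of the Hamiltonian system (9) with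
parameters `(a0, a1, a2, a3, a4)` on the set `U`. -/
def IsHamSol (a0 a1 a2 a3 a4 : ℂ) (U : Set ℂ) (y z : ℂ → ℂ) : Prop :=
  ∀ t ∈ U, DifferentiableAt ℂ y t ∧ DifferentiableAt ℂ z t ∧
    t * (t - 1) * deriv y t =
      2 * y t * (y t - 1) * (y t - t) * z t - (a0 - 1) * y t * (y t - 1)
        - a3 * y t * (y t - t) - a4 * (y t - 1) * (y t - t) ∧
    t * (t - 1) * deriv z t =
      -(y t * (y t - 1) + (y t - 1) * (y t - t) + y t * (y t - t)) * z t ^ 2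
        + ((2 * y t - 1) * (a0 - 1) + (2 * y t - t) * a3 + (2 * y t - t - 1) * a4) * z t
        - (a1 + a2) * a2

/-- **Symmetry σ₁ of the Hamiltonian system (9).** If `(y, z)` solves system (9) with
parameters `(α₀,α₁,α₂,α₃,α₄)` on the open set `U ⊆ ℂ∖{0,1}`, then
`ỹ(t) = 1 - y(1-t)`, `z̃(t) = -z(1-t)` solves system (9) with parameters
`(α₀,α₁,α₂,α₄,α₃)` on `1 - U`; in particular, if `α₃ = α₄`, the system is invariant. -/
theorem ham_backlund_sigma1 (a0 a1 a2 a3 a4 : ℂ) (U : Set ℂ) (hU : IsOpen U)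
    (hU01 : ∀ t ∈ U, t ≠ 0 ∧ t ≠ 1) (y z : ℂ → ℂ)
    (hyz : IsHamSol a0 a1 a2 a3 a4 U y z) :
    IsHamSol a0 a1 a2 a4 a3 ((fun t => 1 - t) '' U)
        (fun t => 1 - y (1 - t)) (fun t => -z (1 - t)) ∧
      (a3 = a4 →
        IsHamSol a0 a1 a2 a3 a4 ((fun t => 1 - t) '' U)
          (fun t => 1 - y (1 - t)) (fun t => -z (1 - t))) := by
  have main : IsHamSol a0 a1 a2 a4 a3 ((fun t => 1 - t) '' U)
      (fun t => 1 - y (1 - t)) (fun t => -z (1 - t)) := by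
    rintro t ⟨s, hs, rfl⟩
    simp only
    have hss : (1 : ℂ) - (1 - s) = s := by ring
    rw [hss]
    obtain ⟨hdy, hdz, hy, hz⟩ := hyz s hs
    set t := (1 : ℂ) - s with ht
    have hct : HasDerivAt (fun u : ℂ => 1 - u) (-1) t := by
      simpa using (hasDerivAt_id t).const_sub 1
    have h1ts : (1 : ℂ) - t = s := by rw [ht]; ring
    have hy' : HasDerivAt (fun u => y (1 - u)) (deriv y s * -1) t := by
      have := (h1ts ▸ hdy).hasDerivAt.comp t hct
      simpa [h1ts, Function.comp_def] using this
    have hz' : HasDerivAt (fun u => -z (1 - u)) (-(deriv z s * -1)) t := by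
      have := ((h1ts ▸ hdz).hasDerivAt.comp t hct).neg
      simpa [h1ts, Function.comp_def, Pi.neg_def] using this
    have hty : HasDerivAt (fun u => 1 - y (1 - u)) (-(deriv y s * -1)) t :=
      hy'.const_sub 1
    refine ⟨hty.differentiableAt, hz'.differentiableAt, ?_, ?_⟩
    · rw [hty.deriv, ht]
      linear_combination hy
    · rw [hz'.deriv, ht]
      linear_combination hz
  exact ⟨main, fun h => h ▸ main⟩
end

section
/- Let α₀,α₁,α₂,α₃,α₄ be complex parameters with α₀ + α₁ + 2α₂ + α₃ + α₄ = 1, and let (y,z) be a solution of the Hamiltonian system (9) on an open set U ⊆ ℂ∖{0,1} with z(t) ≠ 0 for all t ∈ U. Then the pair (ỹ, z̃) := (y + α₂/z, z) is a solution of the Hamiltonian system (9) on U with parameters (α₀+α₂, α₁+α₂, −α₂, α₂+α₃, α₂+α₄). (Bäcklund transformation s₂.) -/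
private lemma s2_key1 (a0 a1 a3 a4 t Y Z dy dz W : ℂ)
    (hsum : a0 + a1 + 2 * (W * Z) + a3 + a4 = 1)
    (h1 : t * (t - 1) * dy =
      2 * Y * (Y - 1) * (Y - t) * Z - (a0 - 1) * Y * (Y - 1)
        - a3 * Y * (Y - t) - a4 * (Y - 1) * (Y - t))
    (h2 : t * (t - 1) * dz =
      -(Y * (Y - 1) + (Y - 1) * (Y - t) + Y * (Y - t)) * Z ^ 2
        + ((2 * Y - 1) * (a0 - 1) + (2 * Y - t) * a3 + (2 * Y - t - 1) * a4) * Z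
        - (a1 + W * Z) * (W * Z)) :
    t * (t - 1) * (dy * Z ^ 2 - W * Z * dz) =
      (2 * (Y + W) * (Y + W - 1) * (Y + W - t) * Z
        - (a0 + W * Z - 1) * (Y + W) * (Y + W - 1)
        - (W * Z + a3) * (Y + W) * (Y + W - t)
        - (W * Z + a4) * (Y + W - 1) * (Y + W - t)) * Z ^ 2 := by
  linear_combination Z ^ 2 * h1 - W * Z * h2 + W ^ 2 * Z ^ 2 * hsum

private lemma s2_key2 (a0 a1 a3 a4 t Y Z dz W : ℂ)
    (hsum : a0 + a1 + 2 * (W * Z) + a3 + a4 = 1)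
    (h2 : t * (t - 1) * dz =
      -(Y * (Y - 1) + (Y - 1) * (Y - t) + Y * (Y - t)) * Z ^ 2
        + ((2 * Y - 1) * (a0 - 1) + (2 * Y - t) * a3 + (2 * Y - t - 1) * a4) * Z
        - (a1 + W * Z) * (W * Z)) :
    t * (t - 1) * dz =
      -((Y + W) * (Y + W - 1) + (Y + W - 1) * (Y + W - t) + (Y + W) * (Y + W - t)) * Z ^ 2
        + ((2 * (Y + W) - 1) * (a0 + W * Z - 1) + (2 * (Y + W) - t) * (W * Z + a3)
            + (2 * (Y + W) - t - 1) * (W * Z + a4)) * Z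
        - (a1 + W * Z + -(W * Z)) * -(W * Z) := by
  linear_combination h2 - 2 * W * Z * hsum


/-- **Bäcklund transformation s₂.** If `α₀ + α₁ + 2α₂ + α₃ + α₄ = 1` and `(y, z)` solves
the Hamiltonian system (9) on the open set `U ⊆ ℂ∖{0,1}` with `z` nowhere zero on `U`,
then `(y + α₂/z, z)` solves system (9) on `U` with parameters
`(α₀+α₂, α₁+α₂, −α₂, α₂+α₃, α₂+α₄)`. -/
theorem ham_backlund_s2 (a0 a1 a2 a3 a4 : ℂ)
    (hsum : a0 + a1 + 2 * a2 + a3 + a4 = 1)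
    (U : Set ℂ) (hU : IsOpen U) (hU01 : ∀ t ∈ U, t ≠ 0 ∧ t ≠ 1)
    (y z : ℂ → ℂ)
    (hyz : IsHamSol a0 a1 a2 a3 a4 U y z)
    (hz : ∀ t ∈ U, z t ≠ 0) :
    IsHamSol (a0 + a2) (a1 + a2) (-a2) (a2 + a3) (a2 + a4) U
      (fun t => y t + a2 / z t) z := by
  intro t ht
  obtain ⟨hy, hz', h1, h2⟩ := hyz t ht
  obtain ⟨ht0, ht1⟩ := hU01 t ht
  have hz0 : z t ≠ 0 := hz t ht
  have hdw : HasDerivAt (fun s => y s + a2 / z s)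
      (deriv y t + (0 * z t - a2 * deriv z t) / z t ^ 2) t :=
    hy.hasDerivAt.add ((hasDerivAt_const t a2).div hz'.hasDerivAt hz0)
  have hdiff : DifferentiableAt ℂ (fun s => y s + a2 / z s) t := hdw.differentiableAt
  have ha2 : a2 / z t * z t = a2 := div_mul_cancel₀ a2 hz0
  have hsum' : a0 + a1 + 2 * (a2 / z t * z t) + a3 + a4 = 1 := by rw [ha2]; exact hsum
  have h2' : t * (t - 1) * deriv z t =
      -(y t * (y t - 1) + (y t - 1) * (y t - t) + y t * (y t - t)) * z t ^ 2
        + ((2 * y t - 1) * (a0 - 1) + (2 * y t - t) * a3 + (2 * y t - t - 1) * a4) * z t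
        - (a1 + a2 / z t * z t) * (a2 / z t * z t) := by rw [ha2]; exact h2
  refine ⟨hdiff, hz', ?_, ?_⟩
  · rw [hdw.deriv]
    have e1 : deriv y t + (0 * z t - a2 * deriv z t) / z t ^ 2
        = (deriv y t * z t ^ 2 - a2 * deriv z t) / z t ^ 2 := by
      field_simp; ring
    rw [e1, ← mul_div_assoc, div_eq_iff (pow_ne_zero 2 hz0)]
    have key := s2_key1 a0 a1 a3 a4 t (y t) (z t) (deriv y t) (deriv z t) (a2 / z t)
      hsum' h1 h2'
    rw [ha2] at key
    linear_combination key
  · have key := s2_key2 a0 a1 a3 a4 t (y t) (z t) (deriv z t) (a2 / z t) hsum' h2'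
    rw [ha2] at key
    linear_combination key
end

section
/- Let α₀,α₁,α₂,α₃,α₄ be complex parameters with α₀ + α₁ + 2α₂ + α₃ + α₄ = 1, and let (y,z) be a solution of the Hamiltonian system (9) on an open set U ⊆ ℂ∖{0,1} with y(t) ≠ t for all t ∈ U. Then the pair (ỹ, z̃) := (y, z − α₀/(y−t)) is a solution of the Hamiltonian system (9) on U with parameters (−α₀, α₁, α₀+α₂, α₃, α₄). (Bäcklund transformation s₀.) -/
set_option maxHeartbeats 1000000 in
/-- **Bäcklund transformation s₀.** If `α₀ + α₁ + 2α₂ + α₃ + α₄ = 1` and `(y, z)` solves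
the Hamiltonian system (9) on the open set `U ⊆ ℂ∖{0,1}` with `y t ≠ t` on `U`, then
`(y, z - α₀/(y - t))` solves system (9) on `U` with parameters
`(−α₀, α₁, α₀+α₂, α₃, α₄)`. -/
theorem ham_backlund_s0 (a0 a1 a2 a3 a4 : ℂ)
    (hsum : a0 + a1 + 2 * a2 + a3 + a4 = 1)
    (U : Set ℂ) (hU : IsOpen U) (hU01 : ∀ t ∈ U, t ≠ 0 ∧ t ≠ 1)
    (y z : ℂ → ℂ)
    (hyz : IsHamSol a0 a1 a2 a3 a4 U y z)
    (hyt : ∀ t ∈ U, y t ≠ t) :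
    IsHamSol (-a0) a1 (a0 + a2) a3 a4 U
      y (fun t => z t - a0 / (y t - t)) := by
  intro t ht
  obtain ⟨hyd, hzd, h1, h2⟩ := hyz t ht
  have hwne : y t - t ≠ 0 := sub_ne_zero.mpr (hyt t ht)
  have hw : HasDerivAt (fun s => y s - s) (deriv y t - 1) t :=
    hyd.hasDerivAt.sub (hasDerivAt_id t)
  have hq : HasDerivAt (fun s => a0 / (y s - s))
      ((0 * (y t - t) - a0 * (deriv y t - 1)) / (y t - t) ^ 2) t :=
    (hasDerivAt_const t a0).div hw hwne
  have hzt : HasDerivAt (fun s => z s - a0 / (y s - s))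
      (deriv z t - (0 * (y t - t) - a0 * (deriv y t - 1)) / (y t - t) ^ 2) t :=
    hzd.hasDerivAt.sub hq
  refine ⟨hyd, hzt.differentiableAt, ?_, ?_⟩
  · field_simp
    linear_combination h1
  · rw [hzt.deriv]
    beta_reduce
    field_simp
    linear_combination a0 * h1 + (y t - t) ^ 2 * h2
      + a0 * (y t - t) ^ 2 * hsum
end

section
/- Let α₀,α₁,α₂,α₃,α₄ be complex parameters with α₀ + α₁ + 2α₂ + α₃ + α₄ = 1, and let (y,z) be a solution of the Hamiltonian system (9) on an open set U ⊆ ℂ∖{0,1} with y(t) ≠ 0 for all t ∈ U. Then the pair (ỹ, z̃) := (y, z − α₄/y) is a solution of the Hamiltonian system (9) on U with parameters (α₀, α₁, α₂+α₄, α₃, −α₄). (Bäcklund transformation s₄.) -/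
/-- **Bäcklund transformation s₄.** If `α₀ + α₁ + 2α₂ + α₃ + α₄ = 1` and `(y, z)` solves
the Hamiltonian system (9) on the open set `U ⊆ ℂ∖{0,1}` with `y` nowhere zero on `U`,
then `(y, z - α₄/y)` solves system (9) on `U` with parameters
`(α₀, α₁, α₂+α₄, α₃, −α₄)`. -/
theorem ham_backlund_s4 (a0 a1 a2 a3 a4 : ℂ)
    (hsum : a0 + a1 + 2 * a2 + a3 + a4 = 1)
    (U : Set ℂ) (hU : IsOpen U) (hU01 : ∀ t ∈ U, t ≠ 0 ∧ t ≠ 1)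
    (y z : ℂ → ℂ)
    (hyz : IsHamSol a0 a1 a2 a3 a4 U y z)
    (hy : ∀ t ∈ U, y t ≠ 0) :
    IsHamSol a0 a1 (a2 + a4) a3 (-a4) U
      y (fun t => z t - a4 / y t) := by
  intro t ht
  obtain ⟨hdy, hdz, hy', hz'⟩ := hyz t ht
  have hy0 := hy t ht
  have hquot : HasDerivAt (fun s => a4 / y s)
      ((0 * y t - a4 * deriv y t) / y t ^ 2) t :=
    (hasDerivAt_const t a4).div hdy.hasDerivAt hy0
  have hnew : HasDerivAt (fun s => z s - a4 / y s)
      (deriv z t - (0 * y t - a4 * deriv y t) / y t ^ 2) t :=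
    hdz.hasDerivAt.sub hquot
  refine ⟨hdy, hnew.differentiableAt, ?_, ?_⟩
  · rw [show (deriv y t) = (t * (t-1))⁻¹ * (t * (t-1) * deriv y t) by
      field_simp [(hU01 t ht).1, sub_ne_zero.mpr (hU01 t ht).2], hy']
    field_simp [(hU01 t ht).1, sub_ne_zero.mpr (hU01 t ht).2]
    ring
  · rw [hnew.deriv]
    have ht0 := (hU01 t ht).1
    have ht1 := sub_ne_zero.mpr (hU01 t ht).2
    field_simp
    linear_combination (y t)^2 * hz' + a4 * hy' + a4 * (y t)^2 * hsum
end

section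
/- Let α₀,α₁,α₂,α₃,α₄ be complex parameters with α₀ + α₁ + 2α₂ + α₃ + α₄ = 1, and let (y,z) be a solution of the Hamiltonian system (9) on an open set U ⊆ ℂ∖{0,1} with y(t) ≠ t for all t ∈ U. Then the pair ỹ(t) := t(y(t)−1)/(y(t)−t), z̃(t) := −((y(t)−t)²·z(t) + (y(t)−t)·α₂)/((t−1)t) is a solution of the Hamiltonian system (9) on U with parameters (α₁, α₀, α₂, α₄, α₃). (Bäcklund transformation π₂.) -/
set_option maxHeartbeats 2000000

/-- **Bäcklund transformation π₂.** If `α₀ + α₁ + 2α₂ + α₃ + α₄ = 1` and `(y, z)` solves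
the Hamiltonian system (9) on the open set `U ⊆ ℂ∖{0,1}` with `y t ≠ t` on `U`, then
`ỹ(t) = t(y(t)-1)/(y(t)-t)`, `z̃(t) = -((y(t)-t)²·z(t) + (y(t)-t)·α₂)/((t-1)t)` solves
system (9) on `U` with parameters `(α₁, α₀, α₂, α₄, α₃)`. -/
theorem ham_backlund_pi2 (a0 a1 a2 a3 a4 : ℂ)
    (hsum : a0 + a1 + 2 * a2 + a3 + a4 = 1)
    (U : Set ℂ) (hU : IsOpen U) (hU01 : ∀ t ∈ U, t ≠ 0 ∧ t ≠ 1)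
    (y z : ℂ → ℂ)
    (hyz : IsHamSol a0 a1 a2 a3 a4 U y z)
    (hyt : ∀ t ∈ U, y t ≠ t) :
    IsHamSol a1 a0 a2 a4 a3 U
      (fun t => t * (y t - 1) / (y t - t))
      (fun t => -((y t - t) ^ 2 * z t + (y t - t) * a2) / ((t - 1) * t)) := by
  intro t ht
  obtain ⟨hy, hz, e1, e2⟩ := hyz t ht
  obtain ⟨ht0, ht1⟩ := hU01 t ht
  have ht1' : t - 1 ≠ 0 := sub_ne_zero.mpr ht1
  have hd : y t - t ≠ 0 := sub_ne_zero.mpr (hyt t ht)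
  have hm : (t - 1) * t ≠ 0 := mul_ne_zero ht1' ht0
  have Hy : HasDerivAt y (deriv y t) t := hy.hasDerivAt
  have Hz : HasDerivAt z (deriv z t) t := hz.hasDerivAt
  have Hden : HasDerivAt (fun s => y s - s) (deriv y t - 1) t :=
    Hy.sub (hasDerivAt_id t)
  have Hnum : HasDerivAt (fun s => s * (y s - 1)) (1 * (y t - 1) + t * deriv y t) t :=
    (hasDerivAt_id t).mul (Hy.sub_const 1)
  have HdY : HasDerivAt (fun s => s * (y s - 1) / (y s - s)) _ t := Hnum.div Hden hd
  have Hn : HasDerivAt (fun s => -((y s - s) ^ 2 * z s + (y s - s) * a2))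
      (-((2 * (y t - t) ^ 1 * (deriv y t - 1)) * z t + (y t - t) ^ 2 * deriv z t
        + (deriv y t - 1) * a2)) t :=
    (((Hden.pow 2).mul Hz).add (Hden.mul_const a2)).neg
  have Hm : HasDerivAt (fun s => (s - 1) * s) (1 * t + (t - 1) * 1) t :=
    ((hasDerivAt_id t).sub_const 1).mul (hasDerivAt_id t)
  have HdZ : HasDerivAt (fun s => -((y s - s) ^ 2 * z s + (y s - s) * a2) / ((s - 1) * s)) _ t :=
    Hn.div Hm hm
  refine ⟨HdY.differentiableAt, HdZ.differentiableAt, ?_, ?_⟩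
  · have hT1 : 2 * (t * (y t - 1) / (y t - t)) * (t * (y t - 1) / (y t - t) - 1)
        * (t * (y t - 1) / (y t - t) - t)
        * (-((y t - t) ^ 2 * z t + (y t - t) * a2) / ((t - 1) * t)) =
        (2 * (t * (y t - 1)) * (t * (y t - 1) - (y t - t)) * (t * (y t - 1) - t * (y t - t))
          * (-((y t - t) ^ 2 * z t + (y t - t) * a2))) / ((y t - t) ^ 3 * ((t - 1) * t)) := by
      field_simp
    have hT2 : (a1 - 1) * (t * (y t - 1) / (y t - t)) * (t * (y t - 1) / (y t - t) - 1) =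
        ((a1 - 1) * (t * (y t - 1)) * (t * (y t - 1) - (y t - t)) * ((y t - t) * ((t - 1) * t)))
          / ((y t - t) ^ 3 * ((t - 1) * t)) := by
      field_simp
    have hT3 : a4 * (t * (y t - 1) / (y t - t)) * (t * (y t - 1) / (y t - t) - t) =
        (a4 * (t * (y t - 1)) * (t * (y t - 1) - t * (y t - t)) * ((y t - t) * ((t - 1) * t)))
          / ((y t - t) ^ 3 * ((t - 1) * t)) := by
      field_simp
    have hT4 : a3 * (t * (y t - 1) / (y t - t) - 1) * (t * (y t - 1) / (y t - t) - t) =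
        (a3 * (t * (y t - 1) - (y t - t)) * (t * (y t - 1) - t * (y t - t))
          * ((y t - t) * ((t - 1) * t)))
          / ((y t - t) ^ 3 * ((t - 1) * t)) := by
      field_simp
    show t * (t - 1) * deriv (fun s => s * (y s - 1) / (y s - s)) t =
      2 * (t * (y t - 1) / (y t - t)) * (t * (y t - 1) / (y t - t) - 1)
          * (t * (y t - 1) / (y t - t) - t)
          * (-((y t - t) ^ 2 * z t + (y t - t) * a2) / ((t - 1) * t))
        - (a1 - 1) * (t * (y t - 1) / (y t - t)) * (t * (y t - 1) / (y t - t) - 1)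
        - a4 * (t * (y t - 1) / (y t - t)) * (t * (y t - 1) / (y t - t) - t)
        - a3 * (t * (y t - 1) / (y t - t) - 1) * (t * (y t - 1) / (y t - t) - t)
    rw [HdY.deriv, hT1, hT2, hT3, hT4, div_sub_div_same, div_sub_div_same, div_sub_div_same,
      ← mul_div_assoc,
      div_eq_div_iff (pow_ne_zero 2 hd) (mul_ne_zero (pow_ne_zero 3 hd) hm)]
    linear_combination (-((y t - t) ^ 3 * ((t - 1) * t) ^ 2)) * e1
      + (y t * (y t - 1) * (y t - t) ^ 3 * ((t - 1) * t) ^ 2) * hsum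
  · have hS1 : -((t * (y t - 1) / (y t - t)) * (t * (y t - 1) / (y t - t) - 1)
          + (t * (y t - 1) / (y t - t) - 1) * (t * (y t - 1) / (y t - t) - t)
          + (t * (y t - 1) / (y t - t)) * (t * (y t - 1) / (y t - t) - t))
        * (-((y t - t) ^ 2 * z t + (y t - t) * a2) / ((t - 1) * t)) ^ 2 =
        (-((t * (y t - 1)) * (t * (y t - 1) - (y t - t))
            + (t * (y t - 1) - (y t - t)) * (t * (y t - 1) - t * (y t - t))
            + (t * (y t - 1)) * (t * (y t - 1) - t * (y t - t)))
          * (-((y t - t) ^ 2 * z t + (y t - t) * a2)) ^ 2)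
          / ((y t - t) ^ 2 * ((t - 1) * t) ^ 2) := by
      field_simp
    have hS2 : ((2 * (t * (y t - 1) / (y t - t)) - 1) * (a1 - 1)
          + (2 * (t * (y t - 1) / (y t - t)) - t) * a4
          + (2 * (t * (y t - 1) / (y t - t)) - t - 1) * a3)
        * (-((y t - t) ^ 2 * z t + (y t - t) * a2) / ((t - 1) * t)) =
        (((2 * (t * (y t - 1)) - (y t - t)) * (a1 - 1)
            + (2 * (t * (y t - 1)) - t * (y t - t)) * a4
            + (2 * (t * (y t - 1)) - t * (y t - t) - (y t - t)) * a3)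
          * (-((y t - t) ^ 2 * z t + (y t - t) * a2)) * ((y t - t) * ((t - 1) * t)))
          / ((y t - t) ^ 2 * ((t - 1) * t) ^ 2) := by
      field_simp
    have hS3 : (a0 + a2) * a2 =
        ((a0 + a2) * a2 * ((y t - t) ^ 2 * ((t - 1) * t) ^ 2))
          / ((y t - t) ^ 2 * ((t - 1) * t) ^ 2) := by
      field_simp
    show t * (t - 1) * deriv (fun s => -((y s - s) ^ 2 * z s + (y s - s) * a2) / ((s - 1) * s)) t =
      -((t * (y t - 1) / (y t - t)) * (t * (y t - 1) / (y t - t) - 1)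
            + (t * (y t - 1) / (y t - t) - 1) * (t * (y t - 1) / (y t - t) - t)
            + (t * (y t - 1) / (y t - t)) * (t * (y t - 1) / (y t - t) - t))
          * (-((y t - t) ^ 2 * z t + (y t - t) * a2) / ((t - 1) * t)) ^ 2
        + ((2 * (t * (y t - 1) / (y t - t)) - 1) * (a1 - 1)
            + (2 * (t * (y t - 1) / (y t - t)) - t) * a4
            + (2 * (t * (y t - 1) / (y t - t)) - t - 1) * a3)
          * (-((y t - t) ^ 2 * z t + (y t - t) * a2) / ((t - 1) * t))
        - (a0 + a2) * a2
    rw [HdZ.deriv, hS1, hS2, hS3, ← add_div, div_sub_div_same,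
      ← mul_div_assoc,
      div_eq_div_iff (pow_ne_zero 2 hm) (mul_ne_zero (pow_ne_zero 2 hd) (pow_ne_zero 2 hm))]
    linear_combination
      ((y t - t) ^ 2 * ((t - 1) * t) ^ 3 * (-(2 * (y t - t) * z t + a2))) * e1
      + (-((y t - t) ^ 4 * ((t - 1) * t) ^ 3)) * e2
      + ((y t - t) ^ 2 * ((t - 1) * t) ^ 3
          * ((t - y t) * (t + y t - 2 * t * y t) * z t
            + a2 * (t * t - t + y t * y t - y t))) * hsum
end

section
/- Let α₀,α₁,α₂,α₃ be complex parameters, and let u be a twice differentiable complex function satisfying the Gauss hypergeometric equation u''(ξ) + ((1−α₃)/ξ + (1−α₀)/(2(ξ−1)))·u'(ξ) + ((α₁+α₂)α₂/(4ξ(ξ−1)))·u(ξ) = 0 on an open set V ⊆ ℂ∖{0,1}. Let W ⊆ ℂ be an open set with x, x−1, x−1/2 ≠ 0 and 4x(1−x) ∈ V for all x ∈ W. Then ψ(x) := u(4x(1−x)) satisfies Heun's equation (18): ψ''(x) + ((1−α₃)/x + (1−α₃)/(x−1) − α₀/(x−1/2))·ψ'(x) + ((α₁+α₂)α₂/(x(x−1)))·ψ(x)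 = 0 on W. -/
/-- **Reduction of Heun's equation (18) to the hypergeometric equation.**
Let `u` satisfy the Gauss hypergeometric equation
`u'' + ((1-α₃)/ξ + (1-α₀)/(2(ξ-1)))·u' + ((α₁+α₂)α₂/(4ξ(ξ-1)))·u = 0` on an open set
`V ⊆ ℂ∖{0,1}`. If `W` is an open set with `x, x-1, x-1/2 ≠ 0` and `4x(1-x) ∈ V` for all
`x ∈ W`, then `ψ(x) := u(4x(1-x))` satisfies Heun's equation (18)
`ψ'' + ((1-α₃)/x + (1-α₃)/(x-1) - α₀/(x-1/2))·ψ' + ((α₁+α₂)α₂/(x(x-1)))·ψ = 0` on `W`. -/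
theorem heun18_reduces_to_hypergeometric (a0 a1 a2 a3 : ℂ)
    (V : Set ℂ) (hV : IsOpen V) (hV01 : ∀ ξ ∈ V, ξ ≠ 0 ∧ ξ ≠ 1)
    (u : ℂ → ℂ)
    (hu : ∀ ξ ∈ V, DifferentiableAt ℂ u ξ ∧ DifferentiableAt ℂ (deriv u) ξ)
    (hueq : ∀ ξ ∈ V,
      deriv (deriv u) ξ
        + ((1 - a3) / ξ + (1 - a0) / (2 * (ξ - 1))) * deriv u ξ
        + ((a1 + a2) * a2 / (4 * ξ * (ξ - 1))) * u ξ = 0)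
    (W : Set ℂ) (hW : IsOpen W)
    (hWreg : ∀ x ∈ W, x ≠ 0 ∧ x ≠ 1 ∧ x ≠ 1 / 2 ∧ 4 * x * (1 - x) ∈ V) :
    ∀ x ∈ W,
      deriv (deriv fun x => u (4 * x * (1 - x))) x
        + ((1 - a3) / x + (1 - a3) / (x - 1) - a0 / (x - 1 / 2)) *
            deriv (fun x => u (4 * x * (1 - x))) x
        + ((a1 + a2) * a2 / (x * (x - 1))) * u (4 * x * (1 - x)) = 0 := by
  have hg : ∀ y : ℂ, HasDerivAt (fun y : ℂ => 4 * y * (1 - y)) (4 - 8 * y) y := by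
    intro y
    have h1 : HasDerivAt (fun y : ℂ => 4 * y * (1 - y))
        (4 * 1 * (1 - y) + 4 * y * (0 - 1)) y :=
      (((hasDerivAt_id y).const_mul 4).mul ((hasDerivAt_const y 1).sub (hasDerivAt_id y)))
    convert h1 using 1
    ring
  have key : ∀ y ∈ W, HasDerivAt (fun y => u (4 * y * (1 - y)))
      (deriv u (4 * y * (1 - y)) * (4 - 8 * y)) y := by
    intro y hy
    exact ((hu _ (hWreg y hy).2.2.2).1.hasDerivAt.comp y (hg y))
  intro x hx
  obtain ⟨hx0, hx1, hx2, hxV⟩ := hWreg x hx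
  obtain ⟨hξ0, hξ1⟩ := hV01 _ hxV
  have hψ' : deriv (fun x => u (4 * x * (1 - x)))
      =ᶠ[nhds x] fun y => deriv u (4 * y * (1 - y)) * (4 - 8 * y) := by
    filter_upwards [hW.mem_nhds hx] with y hy
    exact (key y hy).deriv
  have hdu : HasDerivAt (fun y => deriv u (4 * y * (1 - y)))
      (deriv (deriv u) (4 * x * (1 - x)) * (4 - 8 * x)) x :=
    by exact ((hu _ hxV).2.hasDerivAt.comp x (hg x))
  have hlin : HasDerivAt (fun y : ℂ => 4 - 8 * y) (-8) x := by
    have := ((hasDerivAt_id x).const_mul 8)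
    simpa using ((hasDerivAt_id' x).const_mul (8:ℂ)).const_sub (4:ℂ)
  have h2 : HasDerivAt (fun y => deriv u (4 * y * (1 - y)) * (4 - 8 * y))
      (deriv (deriv u) (4 * x * (1 - x)) * (4 - 8 * x) * (4 - 8 * x)
        + deriv u (4 * x * (1 - x)) * (-8)) x := by
    exact hdu.mul hlin
  have hdd : deriv (deriv fun x => u (4 * x * (1 - x))) x
      = deriv (deriv u) (4 * x * (1 - x)) * (4 - 8 * x) * (4 - 8 * x)
        + deriv u (4 * x * (1 - x)) * (-8) := by
    rw [Filter.EventuallyEq.deriv_eq hψ']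
    exact h2.deriv
  have hψ'x : deriv (fun x => u (4 * x * (1 - x))) x
      = deriv u (4 * x * (1 - x)) * (4 - 8 * x) := (key x hx).deriv
  have heq := hueq _ hxV
  rw [hdd, hψ'x]
  have hx1' : x - 1 ≠ 0 := sub_ne_zero.mpr hx1
  have hx2' : 2 * x - 1 ≠ 0 := by
    intro h
    exact hx2 (by linear_combination h / 2)
  have h1x : 1 - x ≠ 0 := sub_ne_zero.mpr (Ne.symm hx1)
  have hξ1' : 4 * x * (1 - x) - 1 ≠ 0 := sub_ne_zero.mpr hξ1
  have hx2'' : x - 1 / 2 ≠ 0 := sub_ne_zero.mpr hx2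
  have hdiv : a0 / (x - 1 / 2) = 2 * a0 / (2 * x - 1) := by
    rw [div_eq_div_iff hx2'' hx2']; ring
  rw [hdiv]
  have hEXPR :
      deriv (deriv u) (4 * x * (1 - x)) * (4 - 8 * x) * (4 - 8 * x)
          + deriv u (4 * x * (1 - x)) * -8
        + ((1 - a3) / x + (1 - a3) / (x - 1) - 2 * a0 / (2 * x - 1)) *
            (deriv u (4 * x * (1 - x)) * (4 - 8 * x))
        + ((a1 + a2) * a2 / (x * (x - 1))) * u (4 * x * (1 - x))
      = 16 * (2 * x - 1)^2 *
        (deriv (deriv u) (4 * x * (1 - x))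
          + ((1 - a3) / (4 * x * (1 - x)) + (1 - a0) / (2 * (4 * x * (1 - x) - 1)))
              * deriv u (4 * x * (1 - x))
          + ((a1 + a2) * a2 / (4 * (4 * x * (1 - x)) * (4 * x * (1 - x) - 1)))
              * u (4 * x * (1 - x))) := by
    have hx2r : x * 2 - 1 ≠ 0 := by rwa [mul_comm]
    field_simp
    ring
  rw [hEXPR, heq, mul_zero]
end

section
/- Let α₀, α₁, α₃ be complex numbers and set A = 2cos(πα₃), B = 2cos(π(α₀+1)), C = 2cos(πα₁). Define X₁ = 2(cos(π(α₃+1)) + cos(π(α₀−α₁−1)/2) + cos(π(α₀+α₁−1)/2)), X₂ = 2(cos(π(α₃+1)) + cos(π(α₀−α₁+1)/2) + cos(π(α₀+α₁+1)/2)), X₃ = 2(cos(πα₃) + cos(π(α₀−α₁−1)/2) + cos(π(α₀+α₁+1)/2)), X₄ = 2(cos(πα₃) + cos(π(α₀−α₁+1)/2) + cos(π(α₀+α₁−1)/2)). Then for every X ∈ ℂ: (X² − A² − BC)² − 4(2X² − 2(AB+AC)X + 2A² + B² + C² + A²BC − 4) = (X−X₁)(X−X₂)(X−X₃)(X−X₄).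 That is, the discriminant in Y of the quadratic Y² + (X²−A²−BC)Y + (2X² − 2(AB+AC)X + 2A² + B² + C² + A²BC − 4) factors into the four roots X₁,…,X₄, which are exactly the trace coordinates p₁ₜ = pₜ₀ of the linear monodromy of the four symmetric solutions (S2-1)–(S2-4) of σ₁. -/
open Complex

/-- **Theorem 9 (algebraic content).** With `A = 2cos(πα₃)`, `B = 2cos(π(α₀+1))`,
`C = 2cos(πα₁)`, the discriminant in `Y` of the quadratic form of Fricke's relation
`Y² + (X²-A²-BC)Y + (2X² - 2(AB+AC)X + 2A² + B² + C² + A²BC - 4)` factors as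
`(X-X₁)(X-X₂)(X-X₃)(X-X₄)`, where `X₁,…,X₄` are the trace coordinates `p₁ₜ = pₜ₀`
of the linear monodromy of the four symmetric solutions (S2-1)–(S2-4) of σ₁. -/
theorem discriminant_factorization_sigma1 (a0 a1 a3 : ℂ)
    (A B C : ℂ)
    (hA : A = 2 * Complex.cos (Real.pi * a3))
    (hB : B = 2 * Complex.cos (Real.pi * (a0 + 1)))
    (hC : C = 2 * Complex.cos (Real.pi * a1))
    (X1 X2 X3 X4 : ℂ)
    (hX1 : X1 = 2 * (Complex.cos (Real.pi * (a3 + 1))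
      + Complex.cos (Real.pi * (a0 - a1 - 1) / 2)
      + Complex.cos (Real.pi * (a0 + a1 - 1) / 2)))
    (hX2 : X2 = 2 * (Complex.cos (Real.pi * (a3 + 1))
      + Complex.cos (Real.pi * (a0 - a1 + 1) / 2)
      + Complex.cos (Real.pi * (a0 + a1 + 1) / 2)))
    (hX3 : X3 = 2 * (Complex.cos (Real.pi * a3)
      + Complex.cos (Real.pi * (a0 - a1 - 1) / 2)
      + Complex.cos (Real.pi * (a0 + a1 + 1) / 2)))
    (hX4 : X4 = 2 * (Complex.cos (Real.pi * a3)
      + Complex.cos (Real.pi * (a0 - a1 + 1) / 2)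
      + Complex.cos (Real.pi * (a0 + a1 - 1) / 2))) :
    ∀ X : ℂ,
      (X ^ 2 - A ^ 2 - B * C) ^ 2
          - 4 * (2 * X ^ 2 - 2 * (A * B + A * C) * X
            + 2 * A ^ 2 + B ^ 2 + C ^ 2 + A ^ 2 * B * C - 4) =
        (X - X1) * (X - X2) * (X - X3) * (X - X4) := by
  intro X
  set p : ℂ := (Real.pi : ℂ) * a0 / 2 with hp
  set q : ℂ := (Real.pi : ℂ) * a1 / 2 with hq
  set r : ℂ := (Real.pi : ℂ) * a3 with hr
  have hcosπ : Complex.cos ((Real.pi : ℂ)) = -1 := by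
    rw [← Complex.ofReal_cos]; simp [Real.cos_pi]
  have hsinπ : Complex.sin ((Real.pi : ℂ)) = 0 := by
    rw [← Complex.ofReal_sin]; simp [Real.sin_pi]
  have hcosπ2 : Complex.cos ((Real.pi : ℂ) / 2) = 0 := by
    rw [show ((Real.pi : ℂ) / 2) = ((Real.pi / 2 : ℝ) : ℂ) by push_cast; ring,
      ← Complex.ofReal_cos]
    simp [Real.cos_pi_div_two]
  have hsinπ2 : Complex.sin ((Real.pi : ℂ) / 2) = 1 := by
    rw [show ((Real.pi : ℂ) / 2) = ((Real.pi / 2 : ℝ) : ℂ) by push_cast; ring,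
      ← Complex.ofReal_sin]
    simp [Real.sin_pi_div_two]
  have hB' : B = 2 - 4 * (Complex.cos p) ^ 2 := by
    rw [hB, show (Real.pi : ℂ) * (a0 + 1) = p + p + (Real.pi : ℂ) by rw [hp]; ring]
    simp only [Complex.cos_add, Complex.sin_add, hcosπ, hsinπ]
    have := Complex.sin_sq_add_cos_sq p
    linear_combination 2 * this
  have hC' : C = 4 * (Complex.cos q) ^ 2 - 2 := by
    rw [hC, show (Real.pi : ℂ) * a1 = q + q by rw [hq]; ring]
    simp only [Complex.cos_add]
    have := Complex.sin_sq_add_cos_sq q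
    linear_combination (-2) * this
  have e1 : (Real.pi : ℂ) * (a3 + 1) = r + (Real.pi : ℂ) := by rw [hr]; ring
  have e2 : (Real.pi : ℂ) * (a0 - a1 - 1) / 2 = (p - q) - (Real.pi : ℂ) / 2 := by
    rw [hp, hq]; ring
  have e3 : (Real.pi : ℂ) * (a0 + a1 - 1) / 2 = (p + q) - (Real.pi : ℂ) / 2 := by
    rw [hp, hq]; ring
  have e4 : (Real.pi : ℂ) * (a0 - a1 + 1) / 2 = (p - q) + (Real.pi : ℂ) / 2 := by
    rw [hp, hq]; ring
  have e5 : (Real.pi : ℂ) * (a0 + a1 + 1) / 2 = (p + q) + (Real.pi : ℂ) / 2 := by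
    rw [hp, hq]; ring
  have hX1' : X1 = 2 * (-(Complex.cos r) + 2 * Complex.sin p * Complex.cos q) := by
    rw [hX1, e1, e2, e3]
    simp only [Complex.cos_add, Complex.cos_sub, Complex.sin_add, Complex.sin_sub,
      hcosπ, hsinπ, hcosπ2, hsinπ2]
    ring
  have hX2' : X2 = 2 * (-(Complex.cos r) - 2 * Complex.sin p * Complex.cos q) := by
    rw [hX2, e1, e4, e5]
    simp only [Complex.cos_add, Complex.cos_sub, Complex.sin_add, Complex.sin_sub,
      hcosπ, hsinπ, hcosπ2, hsinπ2]
    ring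
  have hX3' : X3 = 2 * (Complex.cos r - 2 * Complex.cos p * Complex.sin q) := by
    rw [hX3, e2, e5]
    simp only [Complex.cos_add, Complex.cos_sub, Complex.sin_add, Complex.sin_sub,
      hcosπ, hsinπ, hcosπ2, hsinπ2]
    ring
  have hX4' : X4 = 2 * (Complex.cos r + 2 * Complex.cos p * Complex.sin q) := by
    rw [hX4, e4, e3]
    simp only [Complex.cos_add, Complex.cos_sub, Complex.sin_add, Complex.sin_sub,
      hcosπ, hsinπ, hcosπ2, hsinπ2]
    ring
  have h12 : (X - X1) * (X - X2)
      = (X + 2 * Complex.cos r) ^ 2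
        - 16 * (1 - (Complex.cos p) ^ 2) * (Complex.cos q) ^ 2 := by
    rw [hX1', hX2']
    linear_combination (-16 * (Complex.cos q) ^ 2) * Complex.sin_sq_add_cos_sq p
  have h34 : (X - X3) * (X - X4)
      = (X - 2 * Complex.cos r) ^ 2
        - 16 * (Complex.cos p) ^ 2 * (1 - (Complex.cos q) ^ 2) := by
    rw [hX3', hX4']
    linear_combination (-16 * (Complex.cos p) ^ 2) * Complex.sin_sq_add_cos_sq q
  calc (X ^ 2 - A ^ 2 - B * C) ^ 2
        - 4 * (2 * X ^ 2 - 2 * (A * B + A * C) * X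
          + 2 * A ^ 2 + B ^ 2 + C ^ 2 + A ^ 2 * B * C - 4)
      = ((X + 2 * Complex.cos r) ^ 2
          - 16 * (1 - (Complex.cos p) ^ 2) * (Complex.cos q) ^ 2)
        * ((X - 2 * Complex.cos r) ^ 2
          - 16 * (Complex.cos p) ^ 2 * (1 - (Complex.cos q) ^ 2)) := by
        rw [hA, hB', hC']; ring
    _ = ((X - X1) * (X - X2)) * ((X - X3) * (X - X4)) := by rw [h12, h34]
    _ = (X - X1) * (X - X2) * (X - X3) * (X - X4) := by ring
end

section
/- Let α₀, α₁ be complex numbers and set A = 2cos(πα₁), B = 2cos(π(α₀−1)). Define X₁ = −1 − 2cos(2πα₀/3) + 4cos(πα₀/3)cos(πα₁), X₂ = −1 − 2cos(2π(α₀−2)/3) + 4cos(π(α₀−2)/3)cos(πα₁), X₃ = −1 − 2cos(2π(α₀+2)/3) + 4cos(π(α₀+2)/3)cos(πα₁). Then for every X ∈ ℂ: X³ + 3X² − 3(A² + AB)X + 3A² + B² + A³B − 4 = (X−X₁)(X−X₂)(X−X₃). The three roots X₁, X₂, X₃ are exactly the trace coordinates pₜ₀ = pₜ₁ = pₜ∞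 of the linear monodromy of the three symmetric solutions (S3-2), (S3-1), (S3-3) of σ₂∘σ₁. -/
open Complex

/-- **Theorem 10 (algebraic content).** With `A = 2cos(πα₁)`, `B = 2cos(π(α₀-1))`,
the cubic form of Fricke's relation `X³ + 3X² - 3(A²+AB)X + 3A² + B² + A³B - 4`
factors as `(X-X₁)(X-X₂)(X-X₃)`, where `X₁, X₂, X₃` are the trace coordinates
`pₜ₀ = pₜ₁ = pₜ∞` of the linear monodromy of the three symmetric solutions
(S3-2), (S3-1), (S3-3) of σ₂∘σ₁. -/
theorem cubic_factorization_sigma2_sigma1 (a0 a1 : ℂ)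
    (A B : ℂ)
    (hA : A = 2 * Complex.cos (Real.pi * a1))
    (hB : B = 2 * Complex.cos (Real.pi * (a0 - 1)))
    (X1 X2 X3 : ℂ)
    (hX1 : X1 = -1 - 2 * Complex.cos (2 * Real.pi * a0 / 3)
      + 4 * Complex.cos (Real.pi * a0 / 3) * Complex.cos (Real.pi * a1))
    (hX2 : X2 = -1 - 2 * Complex.cos (2 * Real.pi * (a0 - 2) / 3)
      + 4 * Complex.cos (Real.pi * (a0 - 2) / 3) * Complex.cos (Real.pi * a1))
    (hX3 : X3 = -1 - 2 * Complex.cos (2 * Real.pi * (a0 + 2) / 3)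
      + 4 * Complex.cos (Real.pi * (a0 + 2) / 3) * Complex.cos (Real.pi * a1)) :
    ∀ X : ℂ,
      X ^ 3 + 3 * X ^ 2 - 3 * (A ^ 2 + A * B) * X
          + 3 * A ^ 2 + B ^ 2 + A ^ 3 * B - 4 =
        (X - X1) * (X - X2) * (X - X3) := by
  intro X
  -- real special values
  have hc23 : Real.cos (2 * Real.pi / 3) = -(1 / 2) := by
    have h : 2 * Real.pi / 3 = Real.pi - Real.pi / 3 := by ring
    rw [h, Real.cos_pi_sub, Real.cos_pi_div_three]
  have hs23 : Real.sin (2 * Real.pi / 3) = Real.sqrt 3 / 2 := by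
    have h : 2 * Real.pi / 3 = Real.pi - Real.pi / 3 := by ring
    rw [h, Real.sin_pi_sub, Real.sin_pi_div_three]
  set u : ℂ := Complex.cos (Real.pi * a0 / 3) with hu
  set s : ℂ := Complex.sin (Real.pi * a0 / 3) with hs
  set v : ℂ := Complex.cos (Real.pi * a1) with hv
  set r : ℂ := (Real.sqrt 3 : ℂ) with hr
  -- the cosine of the shifted angles
  have hw : Complex.cos (Real.pi * (a0 - 2) / 3) = -u / 2 + r * s / 2 := by
    have h : (Real.pi : ℂ) * (a0 - 2) / 3
        = (Real.pi : ℂ) * a0 / 3 - ((2 * Real.pi / 3 : ℝ) : ℂ) := by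
      push_cast; ring
    rw [h, Complex.cos_sub, ← Complex.ofReal_cos, ← Complex.ofReal_sin, hc23, hs23]
    rw [hu, hs, hr]; push_cast; ring
  have hz : Complex.cos (Real.pi * (a0 + 2) / 3) = -u / 2 - r * s / 2 := by
    have h : (Real.pi : ℂ) * (a0 + 2) / 3
        = (Real.pi : ℂ) * a0 / 3 + ((2 * Real.pi / 3 : ℝ) : ℂ) := by
      push_cast; ring
    rw [h, Complex.cos_add, ← Complex.ofReal_cos, ← Complex.ofReal_sin, hc23, hs23]
    rw [hu, hs, hr]; push_cast; ring
  -- double-angle reductions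
  have hC1 : Complex.cos (2 * Real.pi * a0 / 3) = 2 * u ^ 2 - 1 := by
    have h : (2 : ℂ) * Real.pi * a0 / 3 = 2 * ((Real.pi : ℂ) * a0 / 3) := by ring
    rw [h, Complex.cos_two_mul, hu]
  have hC2 : Complex.cos (2 * Real.pi * (a0 - 2) / 3)
      = 2 * (-u / 2 + r * s / 2) ^ 2 - 1 := by
    have h : (2 : ℂ) * Real.pi * (a0 - 2) / 3
        = 2 * ((Real.pi : ℂ) * (a0 - 2) / 3) := by ring
    rw [h, Complex.cos_two_mul, hw]
  have hC3 : Complex.cos (2 * Real.pi * (a0 + 2) / 3)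
      = 2 * (-u / 2 - r * s / 2) ^ 2 - 1 := by
    have h : (2 : ℂ) * Real.pi * (a0 + 2) / 3
        = 2 * ((Real.pi : ℂ) * (a0 + 2) / 3) := by ring
    rw [h, Complex.cos_two_mul, hz]
  -- B in terms of u
  have hBc : Complex.cos (Real.pi * (a0 - 1)) = -(4 * u ^ 3 - 3 * u) := by
    have h : (Real.pi : ℂ) * (a0 - 1)
        = -((Real.pi : ℂ) - 3 * ((Real.pi : ℂ) * a0 / 3)) := by ring
    rw [h, Complex.cos_neg, Complex.cos_pi_sub, Complex.cos_three_mul, hu]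
  -- the two algebraic relations
  have hy : (r * s) ^ 2 = 3 - 3 * u ^ 2 := by
    have h1 : s ^ 2 + u ^ 2 = 1 := Complex.sin_sq_add_cos_sq _
    have h2 : r ^ 2 = 3 := by
      rw [hr, ← Complex.ofReal_pow, Real.sq_sqrt (by norm_num : (3:ℝ) ≥ 0)]
      norm_num
    calc (r * s) ^ 2 = r ^ 2 * s ^ 2 := by ring
      _ = 3 * s ^ 2 := by rw [h2]
      _ = 3 - 3 * u ^ 2 := by linear_combination 3 * h1
  subst hA hB hX1 hX2 hX3
  rw [hC1, hC2, hC3, hBc, hw, hz]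
  set y : ℂ := r * s with hydef
  linear_combination (1 + X - 2*X^2 - 4*v^2 + 4*v^2*X + y^2 - y^2*X + 12*u*v*X
    - 16*u*v^3 + 4*u*y^2*v - 9*u^2 - 3*u^2*X - 4*u^2*y^2 - 4*u^3*v + 20*u^4) * hy
end

section
/- Let α₀, α₁, α₃ be complex numbers, and set p₀ = p₁ = 2cos(πα₃), pₜ = 2cos(π(α₀+1)), p∞ = 2cos(πα₁), p₁ₜ = pₜ₀ = 2(cos(π(α₃+1)) + cos(π(α₀−α₁−1)/2) + cos(π(α₀+α₁−1)/2)), and p₀₁ = −2(1 + cos(π(α₀+1)) + cos(πα₁) + 4cos(πα₁/2)·cos(πα₃)·cos(π(α₀+1)/2)). Then these values satisfy Fricke's cubic relation: p₀₁p₁ₜpₜ₀ + p₀₁² + p₁ₜ² + pₜ₀² − (p₀p₁ + pₜp∞)p₀₁ − (p₁pₜ + p₀p∞)p₁ₜ − (pₜp₀ + p₁p∞)pₜ₀ + p₀² + p₁² + pₜ² + p∞² + p₀pₜp₁p∞ − 4 = 0. -/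
set_option maxHeartbeats 1000000

open Complex

private lemma cos_as_exp (w : ℂ) :
    Complex.cos w = (Complex.exp (w * I) + (Complex.exp (w * I))⁻¹) / 2 := by
  rw [Complex.cos, ← Complex.exp_neg]; ring_nf

/-- **The linear monodromy of the symmetric solution (S2-1) satisfies Fricke's cubic
relation.** The trace coordinates of the linear monodromy of the symmetric solution
(S2-1) of σ₁ (computed in Theorem 7), expressed in cosines of the Painlevé parameters,
satisfy Fricke's cubic relation (1). -/
theorem fricke_relation_S21 (a0 a1 a3 : ℂ)
    (p0 p1 pt pinf p01 p1t pt0 : ℂ)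
    (hp0 : p0 = 2 * Complex.cos (Real.pi * a3))
    (hp1 : p1 = 2 * Complex.cos (Real.pi * a3))
    (hpt : pt = 2 * Complex.cos (Real.pi * (a0 + 1)))
    (hpinf : pinf = 2 * Complex.cos (Real.pi * a1))
    (hp1t : p1t = 2 * (Complex.cos (Real.pi * (a3 + 1))
      + Complex.cos (Real.pi * (a0 - a1 - 1) / 2)
      + Complex.cos (Real.pi * (a0 + a1 - 1) / 2)))
    (hpt0 : pt0 = 2 * (Complex.cos (Real.pi * (a3 + 1))
      + Complex.cos (Real.pi * (a0 - a1 - 1) / 2)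
      + Complex.cos (Real.pi * (a0 + a1 - 1) / 2)))
    (hp01 : p01 = -2 * (1 + Complex.cos (Real.pi * (a0 + 1))
      + Complex.cos (Real.pi * a1)
      + 4 * Complex.cos (Real.pi * a1 / 2) * Complex.cos (Real.pi * a3) *
          Complex.cos (Real.pi * (a0 + 1) / 2))) :
    p01 * p1t * pt0 + p01 ^ 2 + p1t ^ 2 + pt0 ^ 2
      - (p0 * p1 + pt * pinf) * p01 - (p1 * pt + p0 * pinf) * p1t
      - (pt * p0 + p1 * pinf) * pt0
      + p0 ^ 2 + p1 ^ 2 + pt ^ 2 + pinf ^ 2 + p0 * pt * p1 * pinf - 4 = 0 := by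
  set s : ℂ := Complex.exp ((Real.pi : ℂ) * (a0 + 1) / 2 * I) with hs_def
  set y : ℂ := Complex.exp ((Real.pi : ℂ) * a1 / 2 * I) with hy_def
  set z : ℂ := Complex.exp ((Real.pi : ℂ) * a3 / 2 * I) with hz_def
  have hs : s ≠ 0 := Complex.exp_ne_zero _
  have hy : y ≠ 0 := Complex.exp_ne_zero _
  have hz : z ≠ 0 := Complex.exp_ne_zero _
  have e1 : Complex.exp ((Real.pi : ℂ) * a3 * I) = z ^ 2 := by
    rw [show (Real.pi : ℂ) * a3 * I
        = (Real.pi : ℂ) * a3 / 2 * I + (Real.pi : ℂ) * a3 / 2 * I by ring,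
      Complex.exp_add, ← hz_def]; ring
  have e2 : Complex.exp ((Real.pi : ℂ) * (a0 + 1) * I) = s ^ 2 := by
    rw [show (Real.pi : ℂ) * (a0 + 1) * I
        = (Real.pi : ℂ) * (a0 + 1) / 2 * I + (Real.pi : ℂ) * (a0 + 1) / 2 * I by ring,
      Complex.exp_add, ← hs_def]; ring
  have e3 : Complex.exp ((Real.pi : ℂ) * (a3 + 1) * I) = -z ^ 2 := by
    rw [show (Real.pi : ℂ) * (a3 + 1) * I
        = (Real.pi : ℂ) * a3 / 2 * I + (Real.pi : ℂ) * a3 / 2 * I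
          + (Real.pi : ℂ) * I by ring,
      Complex.exp_add, Complex.exp_add, Complex.exp_pi_mul_I, ← hz_def]; ring
  have e4 : Complex.exp ((Real.pi : ℂ) * (a0 - a1 - 1) / 2 * I) = -(s * y⁻¹) := by
    rw [show (Real.pi : ℂ) * (a0 - a1 - 1) / 2 * I
        = (Real.pi : ℂ) * (a0 + 1) / 2 * I + (-((Real.pi : ℂ) * a1 / 2 * I))
          + (-((Real.pi : ℂ) * I)) by ring,
      Complex.exp_add, Complex.exp_add, Complex.exp_neg, Complex.exp_neg,
      Complex.exp_pi_mul_I, ← hs_def, ← hy_def]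
    field_simp
  have e5 : Complex.exp ((Real.pi : ℂ) * (a0 + a1 - 1) / 2 * I) = -(s * y) := by
    rw [show (Real.pi : ℂ) * (a0 + a1 - 1) / 2 * I
        = (Real.pi : ℂ) * (a0 + 1) / 2 * I + (Real.pi : ℂ) * a1 / 2 * I
          + (-((Real.pi : ℂ) * I)) by ring,
      Complex.exp_add, Complex.exp_add, Complex.exp_neg,
      Complex.exp_pi_mul_I, ← hs_def, ← hy_def]
    field_simp
  have e6 : Complex.exp ((Real.pi : ℂ) * a1 * I) = y ^ 2 := by
    rw [show (Real.pi : ℂ) * a1 * I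
        = (Real.pi : ℂ) * a1 / 2 * I + (Real.pi : ℂ) * a1 / 2 * I by ring,
      Complex.exp_add, ← hy_def]; ring
  set a : ℂ := z ^ 2 + (z ^ 2)⁻¹ with ha_def
  set d : ℂ := y + y⁻¹ with hd_def
  set e : ℂ := s + s⁻¹ with he_def
  have Hp0 : p0 = a := by rw [hp0, cos_as_exp, e1, ha_def]; ring
  have Hp1 : p1 = a := by rw [hp1, cos_as_exp, e1, ha_def]; ring
  have hs' : s * s⁻¹ = 1 := mul_inv_cancel₀ hs
  have hy' : y * y⁻¹ = 1 := mul_inv_cancel₀ hy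
  have Hpt : pt = e ^ 2 - 2 := by
    rw [hpt, cos_as_exp, e2, he_def]; linear_combination (-2 : ℂ) * hs'
  have Hpinf : pinf = d ^ 2 - 2 := by
    rw [hpinf, cos_as_exp, e6, hd_def]; linear_combination (-2 : ℂ) * hy'
  have Hp1t : p1t = -(a + d * e) := by
    rw [hp1t, cos_as_exp ((Real.pi : ℂ) * (a3 + 1)),
      cos_as_exp ((Real.pi : ℂ) * (a0 - a1 - 1) / 2),
      cos_as_exp ((Real.pi : ℂ) * (a0 + a1 - 1) / 2),
      e3, e4, e5, ha_def, hd_def, he_def]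
    simp only [inv_neg, mul_inv, inv_inv]
    ring
  have Hpt0 : pt0 = -(a + d * e) := by rw [hpt0, ← hp1t, Hp1t]
  have Hp01 : p01 = -(e ^ 2 + d ^ 2 - 2 + a * d * e) := by
    rw [hp01, cos_as_exp ((Real.pi : ℂ) * (a0 + 1)),
      cos_as_exp ((Real.pi : ℂ) * a1),
      cos_as_exp ((Real.pi : ℂ) * a1 / 2),
      cos_as_exp ((Real.pi : ℂ) * a3), e1,
      cos_as_exp ((Real.pi : ℂ) * (a0 + 1) / 2),
      e2, e6, ← hy_def, ← hs_def, ha_def, hd_def, he_def]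
    linear_combination (2 : ℂ) * hs' + (2 : ℂ) * hy'
  rw [Hp0, Hp1, Hpt, Hpinf, Hp1t, Hpt0, Hp01]
  ring
end

section
/- Let α₀, α₁ be complex numbers, and set A = 2cos(πα₁), B = 2cos(π(α₀−1)), X = −1 − 2cos(2πα₀/3) + 4cos(πα₀/3)cos(πα₁). Then X³ + 3X² − 3(A² + AB)X + 3A² + B² + A³B − 4 = 0. -/
open Complex

lemma S32_aux (u w v z : ℂ) (huw : u * w = 1) :
    (-1 - (u ^ 2 + w ^ 2) + (u + w) * (v + z)) ^ 3
      + 3 * (-1 - (u ^ 2 + w ^ 2) + (u + w) * (v + z)) ^ 2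
      - 3 * ((v + z) ^ 2 + (v + z) * (-(u ^ 3 + w ^ 3)))
          * (-1 - (u ^ 2 + w ^ 2) + (u + w) * (v + z))
      + 3 * (v + z) ^ 2 + (-(u ^ 3 + w ^ 3)) ^ 2
      + (v + z) ^ 3 * (-(u ^ 3 + w ^ 3)) - 4 = 0 := by
  linear_combination (2 - 6 * z ^ 2 - 12 * v * z - 6 * v ^ 2 + 3 * w * z + 3 * w * z ^ 3 + 3 * w * v + 9 * w * v * z ^ 2 + 9 * w * v ^ 2 * z + 3 * w * v ^ 3 - 3 * w ^ 2 - 3 * w ^ 2 * z ^ 2 - 6 * w ^ 2 * v * z - 3 * w ^ 2 * v ^ 2 + 3 * w ^ 3 * z + 3 * w ^ 3 * v + 3 * u * z + 3 * u * z ^ 3 + 3 * u * v + 9 * u * v * z ^ 2 + 9 * u * v ^ 2 * z + 3 * u * v ^ 3 + 2 * u * w - 6 * u * w * z ^ 2 - 12 * u * w * v * z - 6 * u * w * v ^ 2 + 3 * u * w ^ 2 * z + 3 * u * w ^ 2 * v - 3 * u * w ^ 3 - 3 * u ^ 2 - 3 * u ^ 2 * z ^ 2 - 6 * u ^ 2 *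 v * z - 3 * u ^ 2 * v ^ 2 + 3 * u ^ 2 * w * z + 3 * u ^ 2 * w * v + 2 * u ^ 2 * w ^ 2 + 3 * u ^ 3 * z + 3 * u ^ 3 * v - 3 * u ^ 3 * w) * huw

set_option maxHeartbeats 3200000 in
/-- **The trace coordinate of the symmetric solution (S3-2) is a root of the cubic.**
With `A = 2cos(πα₁)`, `B = 2cos(π(α₀-1))` and
`X = -1 - 2cos(2πα₀/3) + 4cos(πα₀/3)cos(πα₁)` (the common trace coordinate
`pₜ₀ = pₜ₁ = pₜ∞` of the linear monodromy of the symmetric solution (S3-2) of σ₂∘σ₁),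
one has `X³ + 3X² - 3(A²+AB)X + 3A² + B² + A³B - 4 = 0`. -/
theorem S32_trace_root_of_cubic (a0 a1 : ℂ)
    (A B X : ℂ)
    (hA : A = 2 * Complex.cos (Real.pi * a1))
    (hB : B = 2 * Complex.cos (Real.pi * (a0 - 1)))
    (hX : X = -1 - 2 * Complex.cos (2 * Real.pi * a0 / 3)
      + 4 * Complex.cos (Real.pi * a0 / 3) * Complex.cos (Real.pi * a1)) :
    X ^ 3 + 3 * X ^ 2 - 3 * (A ^ 2 + A * B) * X
      + 3 * A ^ 2 + B ^ 2 + A ^ 3 * B - 4 = 0 := by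
  set u := Complex.exp (Real.pi * a0 / 3 * I) with hu_def
  set v := Complex.exp (Real.pi * a1 * I) with hv_def
  have hu : u ≠ 0 := Complex.exp_ne_zero _
  have hv : v ≠ 0 := Complex.exp_ne_zero _
  have hu2 : u ^ 2 = Complex.exp (2 * Real.pi * a0 / 3 * I) := by
    rw [sq, hu_def, ← Complex.exp_add]; ring_nf
  have hu3 : u ^ 3 = Complex.exp (Real.pi * a0 * I) := by
    rw [pow_succ, sq, hu_def, ← Complex.exp_add, ← Complex.exp_add]; ring_nf
  have e1 : Complex.cos (Real.pi * a1) = (v + v⁻¹) / 2 := by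
    rw [Complex.cos, neg_mul, Complex.exp_neg]
  have e2 : Complex.cos (Real.pi * a0 / 3) = (u + u⁻¹) / 2 := by
    rw [Complex.cos, neg_mul, Complex.exp_neg]
  have e3 : Complex.cos (2 * Real.pi * a0 / 3) = (u ^ 2 + (u ^ 2)⁻¹) / 2 := by
    rw [Complex.cos, neg_mul, Complex.exp_neg, ← hu2]
  have e4 : Complex.cos (Real.pi * (a0 - 1)) = -(u ^ 3 + (u ^ 3)⁻¹) / 2 := by
    have h : (Real.pi : ℂ) * (a0 - 1) = Real.pi * a0 - Real.pi := by ring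
    rw [h, Complex.cos_sub_pi, Complex.cos, neg_mul, Complex.exp_neg, ← hu3]
    ring
  have key := S32_aux u u⁻¹ v v⁻¹ (mul_inv_cancel₀ hu)
  rw [hA, hB, hX, e1, e2, e3, e4]
  linear_combination key
end

section
/- Let α₁,α₂,α₃,α₄ be complex parameters and set α₀ = 0. Let z be a differentiable function on an open set U ⊆ ℂ∖{0,1} satisfying the Riccati equation (17): t(t−1)·z'(t) = −t(t−1)z² + (1 − 2t + α₃t + α₄(t−1))z − (α₁+α₂)α₂. Then the pair (y,z) with y(t) = t is a solution of the Hamiltonian system (9) with parameters (0, α₁, α₂, α₃, α₄) on U. -/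
/-- **Riccati-type classical solutions for α₀ = 0.** If `z` is a differentiable function
on an open set `U ⊆ ℂ∖{0,1}` satisfying the Riccati equation (17)
`t(t-1)·z' = -t(t-1)z² + (1 - 2t + α₃t + α₄(t-1))z - (α₁+α₂)α₂`, then the pair
`(y, z)` with `y(t) = t` is a solution of the Hamiltonian system (9) with parameters
`(0, α₁, α₂, α₃, α₄)` on `U`. -/
theorem riccati_solution_alpha0_zero (a1 a2 a3 a4 : ℂ)
    (U : Set ℂ) (hU : IsOpen U) (hU01 : ∀ t ∈ U, t ≠ 0 ∧ t ≠ 1)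
    (z : ℂ → ℂ)
    (hz : ∀ t ∈ U, DifferentiableAt ℂ z t)
    (hzeq : ∀ t ∈ U,
      t * (t - 1) * deriv z t =
        -t * (t - 1) * z t ^ 2 + (1 - 2 * t + a3 * t + a4 * (t - 1)) * z t
          - (a1 + a2) * a2) :
    IsHamSol 0 a1 a2 a3 a4 U (fun t => t) z := by
  intro t ht
  refine ⟨differentiableAt_fun_id, hz t ht, ?_, ?_⟩
  · simp
  · simp only
    rw [hzeq t ht]; ring
end
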